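/- arXiv:2205.01153 — 3 statements merged into one kernel-verified Lean document; each statement's English description precedes it below -/
import Mathlib

section
/- Let R be a Noetherian ring, let I ⊆ R be an ideal, let n ≥ 1 be an integer, and let W = R − ⋃_{p ∈ Ass_R(R/I)} p be the complement of the union of the associated primes of R/I. Then the preimage in R of I^n R_W under the localization map R → R_W equals the intersection ⋂_{p ∈ Ass_R(R/I)} (preimage in R of I^n R_p under the localization map R → R_p). -/
open Ideal IsLocalRing

section Finiteness

variable {R : Type*} [CommRing R] {M : Type*} [AddCommGroup M] [Module R M]

lemma colon_bot_singleton_eq (y : M) :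
    (⊥ : Submodule R M).colon {y} = (R ∙ y).annihilator := by
  rw [← Submodule.colon_span, Submodule.bot_colon]

lemma ass_subset_insert [IsNoetherianRing R] (m : M) (hp : ((R ∙ m).annihilator).IsPrime) :
    associatedPrimes R M ⊆
      insert ((R ∙ m).annihilator) (associatedPrimes R (M ⧸ (R ∙ m))) := by
  set p := (R ∙ m).annihilator with hpdef
  rintro q hq'
  obtain ⟨hq, x, rfl⟩ := (isAssociatedPrime_iff).mp hq'
  rw [colon_bot_singleton_eq] at hq ⊢
  by_cases hcase : ∃ r : R, r • x ∈ (R ∙ m) ∧ r • x ≠ 0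
  · left
    obtain ⟨r, hrK, hrne⟩ := hcase
    obtain ⟨c, hc⟩ := Submodule.mem_span_singleton.mp hrK
    have hcp : c ∉ p := by
      intro hcp
      rw [hpdef, Submodule.mem_annihilator_span_singleton] at hcp
      exact hrne (by rw [← hc, hcp])
    have hrq : r ∉ (R ∙ x).annihilator := by
      rw [Submodule.mem_annihilator_span_singleton]
      exact hrne
    -- q = ann (r • x)
    have h1 : (R ∙ x).annihilator = (R ∙ (r • x)).annihilator := by
      ext s
      rw [Submodule.mem_annihilator_span_singleton, Submodule.mem_annihilator_span_singleton]
      constructor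
      · intro h; rw [smul_comm, h, smul_zero]
      · intro h
        rw [smul_smul] at h
        have : s * r ∈ (R ∙ x).annihilator := by
          rwa [Submodule.mem_annihilator_span_singleton]
        rcases hq.mem_or_mem this with h' | h'
        · rwa [Submodule.mem_annihilator_span_singleton] at h'
        · exact absurd h' hrq
    have h2 : (R ∙ (c • m)).annihilator = p := by
      ext s
      rw [Submodule.mem_annihilator_span_singleton]
      constructor
      · intro h
        rw [smul_smul] at h
        have : s * c ∈ p := by
          rwa [hpdef, Submodule.mem_annihilator_span_singleton]
        rcases hp.mem_or_mem this with h' | h'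
        · exact h'
        · exact absurd h' hcp
      · intro h
        rw [hpdef, Submodule.mem_annihilator_span_singleton] at h
        rw [smul_comm, h, smul_zero]
    rw [h1, ← hc, h2]
  · right
    push_neg at hcase
    refine (isAssociatedPrime_iff).mpr ⟨hq, Submodule.Quotient.mk x, ?_⟩
    rw [colon_bot_singleton_eq]
    ext s
    rw [Submodule.mem_annihilator_span_singleton, Submodule.mem_annihilator_span_singleton,
      ← Submodule.Quotient.mk_smul, Submodule.Quotient.mk_eq_zero]
    constructor
    · intro h; rw [h]; exact Submodule.zero_mem _
    · intro h; exact hcase s h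

lemma ass_finite [IsNoetherianRing R] [IsNoetherian R M] :
    (associatedPrimes R M).Finite := by
  have key : ∀ N : Submodule R M, (associatedPrimes R (M ⧸ N)).Finite := by
    intro N
    induction N using IsNoetherian.induction with
    | _ N ih =>
      rcases subsingleton_or_nontrivial (M ⧸ N) with h | h
      · rw [associatedPrimes.eq_empty_of_subsingleton]; exact Set.finite_empty
      · obtain ⟨p, hp'⟩ := associatedPrimes.nonempty R (M ⧸ N)
        obtain ⟨hprime, m, hm⟩ := (isAssociatedPrime_iff).mp hp'
        rw [colon_bot_singleton_eq] at hm
        have hm0 : m ≠ 0 := by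
          rintro rfl
          apply hprime.ne_top
          rw [hm, Submodule.span_singleton_eq_bot.mpr rfl, Submodule.annihilator_bot]
        obtain ⟨x, rfl⟩ := Submodule.mkQ_surjective N m
        set N' : Submodule R M := (R ∙ (N.mkQ x)).comap N.mkQ with hN'
        have hNN' : N < N' := by
          refine lt_of_le_of_ne ?_ ?_
          · intro y hy
            simp only [hN', Submodule.mem_comap]
            rw [show N.mkQ y = 0 from (Submodule.Quotient.mk_eq_zero N).mpr hy]
            exact Submodule.zero_mem _
          · intro hEq
            apply hm0
            rw [show N.mkQ x = 0 ↔ x ∈ N from Submodule.Quotient.mk_eq_zero N]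
            have : x ∈ N' := Submodule.mem_comap.mpr (Submodule.mem_span_singleton_self _)
            rwa [← hEq] at this
        have hmap : Submodule.map N.mkQ N' = (R ∙ (N.mkQ x)) := by
          rw [hN', Submodule.map_comap_eq, Submodule.range_mkQ, top_inf_eq]
        have hle : N ≤ N' := hNN'.le
        have e : ((M ⧸ N) ⧸ (Submodule.map N.mkQ N')) ≃ₗ[R] M ⧸ N' :=
          Submodule.quotientQuotientEquivQuotient N N' hle
        have hsub : associatedPrimes R (M ⧸ N) ⊆
            insert p (associatedPrimes R ((M ⧸ N) ⧸ (R ∙ (N.mkQ x)))) := by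
          have := ass_subset_insert (R := R) (N.mkQ x) (by rwa [← hm])
          rwa [← hm] at this
        refine Set.Finite.subset (Set.Finite.insert p ?_) hsub
        rw [show associatedPrimes R ((M ⧸ N) ⧸ (R ∙ (N.mkQ x)))
            = associatedPrimes R (M ⧸ N') from ?_]
        · exact ih N' hNN'
        · rw [← hmap]
          exact LinearEquiv.AssociatedPrimes.eq e
  have := key ⊥
  rwa [LinearEquiv.AssociatedPrimes.eq (Submodule.quotEquivOfEqBot ⊥ rfl)] at this

end Finiteness

lemma mem_comap_map_localization {R : Type*} [CommRing R] (W : Submonoid R) (J : Ideal R)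
    (x : R) :
    x ∈ (J.map (algebraMap R (Localization W))).comap (algebraMap R (Localization W)) ↔
      ∃ w ∈ W, w * x ∈ J := by
  rw [Ideal.mem_comap, IsLocalization.mem_map_algebraMap_iff W]
  constructor
  · rintro ⟨⟨⟨i, hi⟩, ⟨w, hw⟩⟩, hx⟩
    simp only at hx
    rw [← _root_.map_mul] at hx
    obtain ⟨c, hc⟩ := (IsLocalization.eq_iff_exists W (Localization W)).mp hx
    refine ⟨c * w, W.mul_mem c.2 hw, ?_⟩
    have : (c : R) * (x * w) = c * i := hc
    have heq : (c : R) * w * x = (c : R) * i := by rw [← this]; ring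
    rw [heq]
    exact Ideal.mul_mem_left _ _ hi
  · rintro ⟨w, hw, hwx⟩
    exact ⟨⟨⟨w * x, hwx⟩, ⟨w, hw⟩⟩, by simp only [← _root_.map_mul]; rw [mul_comm]⟩


/-- The multiplicative set `W = R − ⋃_{p ∈ Ass_R(R/I)} p`, the complement of the union of the
associated primes of `R/I`. -/
def assPrimesCompl {R : Type*} [CommRing R] (I : Ideal R) : Submonoid R where
  carrier := {x : R | ∀ p ∈ associatedPrimes R (R ⧸ I), x ∉ p}
  mul_mem' := by
    intro a b ha hb p hp hab
    rcases hp.isPrime.mem_or_mem hab with h | h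
    · exact ha p hp h
    · exact hb p hp h
  one_mem' := fun p hp h => hp.isPrime.ne_top ((Ideal.eq_top_iff_one _).mpr h)

/-- The `n`-th symbolic power `I⁽ⁿ⁾ = IⁿR_W ∩ R`, i.e. the preimage in `R` of `Iⁿ R_W` under the
localization map `R → R_W`, where `W` is the complement of the union of the associated primes
of `R/I`. -/
noncomputable def symbolicPower {R : Type*} [CommRing R] (I : Ideal R) (n : ℕ) : Ideal R :=
  (Ideal.map (algebraMap R (Localization (assPrimesCompl I))) (I ^ n)).comap
    (algebraMap R (Localization (assPrimesCompl I)))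

/-- The preimage in `R` of `Iⁿ R_p` under the localization map `R → R_p`, for `p` a prime. -/
noncomputable def localPower {R : Type*} [CommRing R] (I : Ideal R) (n : ℕ) (p : Ideal R)
    (hp : p.IsPrime) : Ideal R :=
  letI := hp
  (Ideal.map (algebraMap R (Localization.AtPrime p)) (I ^ n)).comap
    (algebraMap R (Localization.AtPrime p))

theorem stmt0 {R : Type*} [CommRing R] [IsNoetherianRing R] (I : Ideal R) (n : ℕ) (hn : 1 ≤ n) :
    symbolicPower I n =
      ⨅ (p : Ideal R) (hp : p ∈ associatedPrimes R (R ⧸ I)), localPower I n p hp.isPrime := by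
  ext x
  simp only [Submodule.mem_iInf]
  unfold symbolicPower
  rw [mem_comap_map_localization]
  have hloc : ∀ (p : Ideal R) (hp : p ∈ associatedPrimes R (R ⧸ I)),
      x ∈ localPower I n p hp.isPrime ↔ ∃ s ∉ p, s * x ∈ I ^ n := by
    intro p hp
    letI := hp.isPrime
    unfold localPower
    rw [mem_comap_map_localization p.primeCompl (I ^ n) x]
    rfl
  constructor
  · rintro ⟨w, hw, hwx⟩ p hp
    exact (hloc p hp).mpr ⟨w, hw p hp, hwx⟩
  · intro h
    set J : Ideal R := (I ^ n).colon (Ideal.span {x}) with hJ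
    have hJp : ∀ p ∈ associatedPrimes R (R ⧸ I), ¬ J ≤ p := by
      intro p hp hle
      obtain ⟨s, hs, hsx⟩ := (hloc p hp).mp (h p hp)
      exact hs (hle (show s ∈ (I ^ n).colon (Submodule.span R {x} : Set R) by
        rw [Submodule.colon_span]
        exact Submodule.mem_colon_singleton.mpr (by rwa [smul_eq_mul])))
    by_contra hcon
    push_neg at hcon
    have hsubset : (J : Set R) ⊆ ⋃ p ∈ associatedPrimes R (R ⧸ I), (p : Set R) := by
      intro w hwJ
      by_contra hw
      simp only [Set.mem_iUnion, not_exists] at hw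
      refine hcon w (fun p hp hwp => hw p hp hwp) ?_
      have := Submodule.mem_colon_singleton.mp (show w ∈ (I ^ n).colon ({x} : Set R) by
        rw [← Submodule.colon_span]; exact hwJ)
      rwa [smul_eq_mul] at this
    haveI : IsNoetherian R (R ⧸ I) := inferInstance
    have hfin : (associatedPrimes R (R ⧸ I)).Finite := ass_finite
    rw [← hfin.coe_toFinset] at hsubset
    have := (Ideal.subset_union_prime (⊥ : Ideal R) (⊥ : Ideal R)
      (f := id) (fun p hp _ _ => ((hfin.mem_toFinset.mp hp)).isPrime)).mp hsubset
    obtain ⟨p, hp, hle⟩ := this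
    exact hJp p (hfin.mem_toFinset.mp hp) hle
end

section
/- Let (R, m) be a complete Noetherian local domain, let I ⊆ R be an ideal, let M ≥ 1 and h ≥ 1 and n ≥ 1 be integers, let s_1, …, s_n be non-negative integers, and let u ∈ I^{(M)}. Assume that for every associated prime p of R/I there exists an ideal J ⊆ I generated by at most h elements such that J R_p is a reduction of I R_p. Let v be an element of an algebraic closure of Frac(R) with v^M = u, and let R' be the integral closure of R[v] in Frac(R)(v). Let cl be a closure operation on the ideals of R' satisfying extension, order-preservation, and the Briançon–Skoda axiom. Then for every associated prime p_ℓ of R/I there exists c_ℓ ∈ R − p_ℓ such that for every i = 1, …, n one has c_ℓ·v^{s_i+h} ∈ (I^{s_i+1}R')^{cl}. -/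
set_option synthInstance.maxHeartbeats 1000000
set_option maxHeartbeats 2000000

open Ideal IsLocalRing

/-- `J` is a reduction of `I` if `J ⊆ I` and `I^(m+1) = J·I^m` for some `m ≥ 0`. -/
def Ideal.IsReduction {S : Type*} [CommRing S] (J I : Ideal S) : Prop :=
  J ≤ I ∧ ∃ m : ℕ, I ^ (m + 1) = J * I ^ m

/-- `J R_p` is a reduction of `I R_p` in the localization of `R` at the prime `p`. -/
def isReductionAt {R : Type*} [CommRing R] (p : Ideal R) (hp : p.IsPrime) (J I : Ideal R) :
    Prop :=
  letI := hp
  Ideal.IsReduction (Ideal.map (algebraMap R (Localization.AtPrime p)) J)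
    (Ideal.map (algebraMap R (Localization.AtPrime p)) I)

/-- The integral closure of an ideal `J`: the set of elements `x` satisfying an equation
`x^n + a_1 x^(n-1) + ⋯ + a_n = 0` with `a_i ∈ J^i` for some `n ≥ 1`. -/
def Ideal.integralClosureSet {S : Type*} [CommRing S] (J : Ideal S) : Set S :=
  {x | ∃ n : ℕ, 0 < n ∧ ∃ a : ℕ → S, (∀ i, 1 ≤ i → i ≤ n → a i ∈ J ^ i) ∧
    x ^ n + ∑ i ∈ Finset.range n, a (i + 1) * x ^ (n - (i + 1)) = 0}

/-- The determinant trick: if `y · N ⊆ Q · N` for a nonzero f.g. ideal `N` of a domain,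
then `y` is integral over `Q`. -/
lemma stmt9_detTrick {S : Type*} [CommRing S] [IsDomain S] (Q N : Ideal S) (hfg : N.FG)
    (hN : N ≠ ⊥) (y : S) (hy : ∀ x ∈ N, y * x ∈ Q * N) : y ∈ Q.integralClosureSet := by
  haveI : Module.Finite S N := Module.Finite.iff_fg.mpr hfg
  have hQN : Q * N ≤ N := Ideal.mul_le_right
  let f : Module.End S N :=
    { toFun := fun x => ⟨y * x.1, hQN (hy x.1 x.2)⟩
      map_add' := by intro a b; ext; simp [mul_add]
      map_smul' := by intro r a; ext; simp [smul_eq_mul]; ring }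
  have hf : LinearMap.range f ≤ Q • (⊤ : Submodule S N) := by
    rintro z ⟨x, rfl⟩
    rw [Submodule.mem_smul_top_iff]
    show y * x.1 ∈ Q • N
    rw [smul_eq_mul]
    exact hy x.1 x.2
  obtain ⟨p, hmonic, -, hcoeff, heval⟩ :=
    LinearMap.exists_monic_and_coeff_mem_pow_and_aeval_eq_zero_of_range_le_smul S f Q hf
  have hfpow : ∀ (k : ℕ) (x : N), ((f ^ k) x : S) = y ^ k * (x : S) := by
    intro k
    induction k with
    | zero => intro x; simp
    | succ k ih =>
      intro x
      rw [pow_succ, Module.End.mul_apply, ih]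
      show y ^ k * (y * (x : S)) = _
      ring
  have key : ∀ x ∈ N, Polynomial.eval y p * x = 0 := by
    intro x hx
    have h0 : (Polynomial.aeval f p) ⟨x, hx⟩ = 0 := by rw [heval]; rfl
    have h1 : (((Polynomial.aeval f p) ⟨x, hx⟩ : N) : S) = Polynomial.eval y p * x := by
      rw [Polynomial.aeval_endomorphism, Polynomial.eval_eq_sum]
      simp only [Polynomial.sum, AddSubmonoidClass.coe_finset_sum, Finset.sum_mul]
      apply Finset.sum_congr rfl
      intro i _
      rw [SetLike.val_smul, smul_eq_mul, hfpow]
      ring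
    rw [h0] at h1
    simpa using h1.symm
  obtain ⟨x0, hx0N, hx0⟩ := Submodule.exists_mem_ne_zero_of_ne_bot hN
  have hev : Polynomial.eval y p = 0 := by
    rcases mul_eq_zero.mp (key x0 hx0N) with h' | h'
    · exact h'
    · exact absurd h' hx0
  set d := p.natDegree with hd
  have hdpos : 0 < d := by
    rcases Nat.eq_zero_or_pos d with h0 | h0
    · exfalso
      have hp1 : p = 1 := (Polynomial.Monic.natDegree_eq_zero hmonic).mp (by omega)
      rw [hp1] at hev
      simp at hev
    · exact h0
  refine ⟨d, hdpos, fun i => p.coeff (d - i), ?_, ?_⟩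
  · intro i h1 h2
    have := hcoeff (d - i)
    rwa [Nat.sub_sub_self h2] at this
  · have hsum : ∑ i ∈ Finset.range d, p.coeff (d - (i + 1)) * y ^ (d - (i + 1))
        = ∑ i ∈ Finset.range d, p.coeff i * y ^ i := by
      conv_rhs => rw [← Finset.sum_range_reflect]
      apply Finset.sum_congr rfl
      intro i hi
      have : d - (i + 1) = d - 1 - i := by omega
      rw [this]
    rw [hsum, add_comm]
    rw [Polynomial.eval_eq_sum_range, Finset.sum_range_succ, hmonic.coeff_natDegree,
      ← hd] at hev
    simpa using hev

/-- Uniform denominator for finitely generated ideals under localization maps. -/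
lemma stmt9_denom {R : Type*} [CommRing R] (P : Submonoid R) (B C : Ideal R) (hB : B.FG)
    (hle : B.map (algebraMap R (Localization P)) ≤ C.map (algebraMap R (Localization P))) :
    ∃ c ∈ P, ∀ x ∈ B, c * x ∈ C := by
  classical
  obtain ⟨G, hG⟩ := hB
  have hg : ∀ g : G, ∃ c ∈ P, c * (g : R) ∈ C := by
    rintro ⟨g, hgG⟩
    have hgB : g ∈ B := hG ▸ Ideal.subset_span hgG
    have hmem : algebraMap R (Localization P) g ∈ C.map (algebraMap R (Localization P)) :=
      hle (Ideal.mem_map_of_mem _ hgB)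
    rw [IsLocalization.mem_map_algebraMap_iff P] at hmem
    obtain ⟨⟨a, s⟩, has⟩ := hmem
    rw [← _root_.map_mul] at has
    obtain ⟨cc, hcc⟩ := (IsLocalization.eq_iff_exists P _).mp has
    refine ⟨cc * s, mul_mem cc.2 s.2, ?_⟩
    have heq : ((cc : R) * (s : R)) * g = (cc : R) * (a : R) := by
      rw [← hcc]; ring
    rw [heq]
    exact C.mul_mem_left _ a.2
  choose cg hcgP hcg using hg
  refine ⟨∏ g ∈ G.attach, cg g, Submonoid.prod_mem _ fun g _ => hcgP g, ?_⟩
  intro x hx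
  rw [← hG] at hx
  induction hx using Submodule.span_induction with
  | mem z hz =>
    rw [← Finset.mul_prod_erase G.attach cg (Finset.mem_attach _ ⟨z, hz⟩)]
    have : cg ⟨z, hz⟩ * (∏ g ∈ G.attach.erase ⟨z, hz⟩, cg g) * z
        = (∏ g ∈ G.attach.erase ⟨z, hz⟩, cg g) * (cg ⟨z, hz⟩ * z) := by ring
    rw [this]
    exact C.mul_mem_left _ (hcg ⟨z, hz⟩)
  | zero => simp
  | add a b _ _ ha hb => rw [mul_add]; exact C.add_mem ha hb
  | smul r a _ ha =>
    rw [smul_eq_mul, mul_left_comm]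
    exact C.mul_mem_left _ ha

/-- Iterated reduction step. -/
lemma stmt9_steppow {R : Type*} [CommRing R] (I J : Ideal R) (m : ℕ) (c2 : R)
    (hstep : ∀ x ∈ I ^ (m + 1), c2 * x ∈ J * I ^ m) (k : ℕ) :
    ∀ e : ℕ, ∀ x ∈ I ^ (m + k + e), c2 ^ k * x ∈ J ^ k * I ^ (m + e) := by
  induction k with
  | zero =>
    intro e x hx
    simpa [Ideal.one_eq_top] using hx
  | succ k ih =>
    intro e x hx
    have hx' : x ∈ I ^ (m + k + (e + 1)) := by
      rwa [show m + k + (e + 1) = m + (k + 1) + e by omega]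
    have h1 : c2 ^ k * x ∈ J ^ k * I ^ (m + (e + 1)) := ih (e + 1) x hx'
    have hmul : Ideal.span {c2} * (J ^ k * I ^ (m + (e + 1))) ≤ J ^ (k + 1) * I ^ (m + e) := by
      have h2 : Ideal.span {c2} * I ^ (m + 1) ≤ J * I ^ m :=
        Ideal.span_singleton_mul_le_iff.mpr hstep
      calc Ideal.span {c2} * (J ^ k * I ^ (m + (e + 1)))
          = J ^ k * (Ideal.span {c2} * I ^ (m + 1) * I ^ e) := by
            rw [show m + (e + 1) = (m + 1) + e by omega, pow_add]; ring
        _ ≤ J ^ k * (J * I ^ m * I ^ e) :=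
            Ideal.mul_mono_right (Ideal.mul_mono_left h2)
        _ = J ^ (k + 1) * I ^ (m + e) := by rw [pow_add I m e, pow_succ]; ring
    have : c2 ^ (k + 1) * x = c2 * (c2 ^ k * x) := by ring
    rw [this]
    exact hmul (Ideal.mul_mem_mul (Ideal.mem_span_singleton_self c2) h1)

/-- Membership in a finite sum of ideals from membership in one summand. -/
lemma stmt9_mem_sum {S : Type*} [CommRing S] {ι : Type*} (F : Finset ι) (T : ι → Ideal S)
    {j : ι} (hj : j ∈ F) {x : S} (hx : x ∈ T j) : x ∈ ∑ k ∈ F, T k := by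
  classical
  rw [← Finset.add_sum_erase F T hj, Submodule.add_eq_sup]
  exact Submodule.mem_sup_left hx


/-- Core construction: the twisted power of `w` is integral over `(J B)^sh`. -/
lemma stmt9_core {R B : Type*} [CommRing R] [IsNoetherianRing R] [CommRing B] [IsDomain B]
    (φ : R →+* B) (hφinj : Function.Injective φ)
    (I J : Ideal R) (x0 : R) (hx0I : x0 ∈ I) (hx0ne : x0 ≠ 0)
    (M : ℕ) (hM : 1 ≤ M) (m : ℕ) (u c1 c2 : R)
    (hc1u : c1 * u ∈ I ^ M)
    (hc2 : ∀ x ∈ I ^ (m + 1), c2 * x ∈ J * I ^ m)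
    (w : B) (hwM : w ^ M = φ u)
    (sh : ℕ) (hsh : 1 ≤ sh)
    (K1 S2 : ℕ) (hK1 : sh ≤ K1) (hS2 : sh ≤ S2) :
    φ (c1 ^ K1 * c2 ^ S2) * w ^ sh ∈ ((J.map φ) ^ sh).integralClosureSet := by
  classical
  set c : R := c1 ^ K1 * c2 ^ S2 with hcdef
  set Q : Ideal B := (J.map φ) ^ sh with hQdef
  set T : ℕ → Ideal B := fun j => (I ^ (m + (M - j))).map φ * Ideal.span {w ^ j} with hTdef
  set N : Ideal B := ∑ j ∈ Finset.range M, T j with hNdef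
  have hTleN : ∀ j ∈ Finset.range M, T j ≤ N := by
    intro j hj x hx
    exact stmt9_mem_sum _ _ hj hx
  have hNfg : N.FG := by
    refine Finset.sum_induction T Ideal.FG (fun a b ha hb => ?_) ?_ (fun j _ => ?_)
    · rw [Submodule.add_eq_sup]; exact Submodule.FG.sup ha hb
    · exact Submodule.fg_bot
    · exact Submodule.FG.mul (Ideal.FG.map (IsNoetherian.noetherian _) φ)
        (Submodule.fg_span_singleton _)
  have hNne : N ≠ ⊥ := by
    intro hbot
    have hmem : φ (x0 ^ (m + M)) ∈ T 0 := by
      rw [hTdef]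
      simp only [Nat.sub_zero, pow_zero]
      have h1 : φ (x0 ^ (m + M)) ∈ (I ^ (m + M)).map φ :=
        Ideal.mem_map_of_mem _ (Ideal.pow_mem_pow hx0I _)
      have h2 : (1 : B) ∈ Ideal.span {(1 : B)} := Ideal.mem_span_singleton_self _
      have := Ideal.mul_mem_mul h1 h2
      simpa using this
    have hmemN : φ (x0 ^ (m + M)) ∈ N := hTleN 0 (Finset.mem_range.mpr (by omega)) hmem
    rw [hbot, Submodule.mem_bot, _root_.map_pow] at hmemN
    have hx00 : φ x0 = 0 := pow_eq_zero_iff (by omega : m + M ≠ 0) |>.mp hmemN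
    exact hx0ne (hφinj (by rw [hx00, map_zero]))
  -- The key containment.
  have hcore : ∀ z ∈ N, (φ c * w ^ sh) * z ∈ Q * N := by
    have hspan : Ideal.span {φ c * w ^ sh} * N ≤ Q * N := by
      rw [hNdef, Finset.mul_sum]
      refine Finset.sum_induction _ (· ≤ Q * N) (fun a b ha hb => ?_) ?_ (fun j hj => ?_)
      · rw [Submodule.add_eq_sup]; exact sup_le ha hb
      · simp
      · rw [Finset.mem_range] at hj
        set q : ℕ := (sh + j) / M with hqdef
        set r : ℕ := (sh + j) % M with hrdef
        have hdm : M * q + r = sh + j := Nat.div_add_mod _ _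
        have hrM : r < M := Nat.mod_lt _ (by omega)
        have hqle : q ≤ sh := by
          have hlt : sh + j < (sh + 1) * M := by nlinarith
          have := (Nat.div_lt_iff_lt_mul (by omega : 0 < M)).mpr hlt
          omega
        -- reorganize the product
        have hreorg : Ideal.span {φ c * w ^ sh} * T j
            = (I ^ (m + (M - j))).map φ * Ideal.span {(φ c * w ^ sh) * w ^ j} := by
          simp only [hTdef]
          conv_rhs => rw [← Ideal.span_singleton_mul_span_singleton]
          ring
        rw [hreorg]
        -- colon argument
        have hcol : (I ^ (m + (M - j))).map φ
            ≤ (Q * N).colon (Ideal.span {(φ c * w ^ sh) * w ^ j}) := by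
          rw [Ideal.map_le_iff_le_comap]
          intro x hx
          rw [Ideal.mem_comap, Ideal.mem_colon_span_singleton]
          -- core computation
          have hg1 : (c1 * u) ^ q * x ∈ I ^ (M * q + (m + (M - j))) := by
            rw [pow_add, pow_mul]
            exact Ideal.mul_mem_mul (Ideal.pow_mem_pow hc1u q) hx
          have hexp : M * q + (m + (M - j)) = m + sh + (M - r) := by omega
          rw [hexp] at hg1
          have hg2 : c2 ^ sh * ((c1 * u) ^ q * x)
              ∈ J ^ sh * I ^ (m + (M - r)) :=
            stmt9_steppow I J m c2 hc2 sh (M - r) _ hg1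
          -- the element equality
          obtain ⟨a, ha⟩ : ∃ a, K1 = a + q := ⟨K1 - q, by omega⟩
          obtain ⟨b, hb⟩ : ∃ b, S2 = b + sh := ⟨S2 - sh, by omega⟩
          have heqR' : φ x * ((φ c * w ^ sh) * w ^ j)
              = φ (c1 ^ a * c2 ^ b)
                * (φ (c2 ^ sh * ((c1 * u) ^ q * x)) * w ^ r) := by
            have h1 : w ^ (sh + j) = φ (u ^ q) * w ^ r := by
              rw [show sh + j = M * q + r by omega, pow_add, pow_mul, hwM, ← _root_.map_pow]
            calc φ x * ((φ c * w ^ sh) * w ^ j)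
                = φ x * φ c * w ^ (sh + j) := by rw [pow_add]; ring
              _ = φ x * φ c * (φ (u ^ q) * w ^ r) := by rw [h1]
              _ = φ (x * c * u ^ q) * w ^ r := by simp only [_root_.map_mul]; ring
              _ = _ := by
                  conv_rhs => rw [← mul_assoc, ← _root_.map_mul]
                  have hsc : x * c * u ^ q
                      = c1 ^ a * c2 ^ b * (c2 ^ sh * ((c1 * u) ^ q * x)) := by
                    rw [hcdef, ha, hb, mul_pow, pow_add, pow_add]
                    ring
                  rw [hsc]
          rw [heqR']
          -- membership
          have hmem2 : φ (c2 ^ sh * ((c1 * u) ^ q * x))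
              ∈ Q * (I ^ (m + (M - r))).map φ := by
            have := Ideal.mem_map_of_mem φ hg2
            rwa [Ideal.map_mul, Ideal.map_pow] at this
          have hmem3 : φ (c2 ^ sh * ((c1 * u) ^ q * x)) * w ^ r ∈ Q * T r := by
            rw [hTdef, ← mul_assoc]
            exact Ideal.mul_mem_mul hmem2 (Ideal.mem_span_singleton_self _)
          have hmem4 : φ (c2 ^ sh * ((c1 * u) ^ q * x)) * w ^ r ∈ Q * N :=
            Ideal.mul_mono_right (hTleN r (Finset.mem_range.mpr hrM)) hmem3
          exact (Q * N).mul_mem_left _ hmem4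
        refine Ideal.mul_le.mpr fun a ha z hz => ?_
        obtain ⟨e, rfl⟩ := Ideal.mem_span_singleton'.mp hz
        have hmm := (Ideal.mem_colon_span_singleton).mp (hcol ha)
        have heq : a * (e * ((φ c * w ^ sh) * w ^ j))
            = e * (a * ((φ c * w ^ sh) * w ^ j)) := by ring
        rw [heq]
        exact (Q * N).mul_mem_left _ hmm
    intro z hz
    exact hspan (Ideal.mul_mem_mul (Ideal.mem_span_singleton_self _) hz)
  exact stmt9_detTrick Q N hNfg hNne _ hcore

theorem stmt9 {R : Type*} [CommRing R] [IsDomain R] [IsNoetherianRing R] [IsLocalRing R]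
    [IsAdicComplete (maximalIdeal R) R]
    (I : Ideal R) (M h n : ℕ) (hM : 1 ≤ M) (hh : 1 ≤ h) (hn : 1 ≤ n) (s : Fin n → ℕ)
    (u : R) (hu : u ∈ symbolicPower I M)
    (hred : ∀ p, ∀ hp : p ∈ associatedPrimes R (R ⧸ I), ∃ J : Ideal R, J ≤ I ∧
      (∃ t : Finset R, t.card ≤ h ∧ Ideal.span (t : Set R) = J) ∧
      isReductionAt p hp.isPrime J I)
    (v : AlgebraicClosure (FractionRing R))
    (hv : v ^ M = algebraMap R (AlgebraicClosure (FractionRing R)) u)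
    (L : IntermediateField (FractionRing R) (AlgebraicClosure (FractionRing R)))
    (hL : L = IntermediateField.adjoin (FractionRing R) {v})
    (v' : L) (hv' : (v' : AlgebraicClosure (FractionRing R)) = v)
    (R' : Subalgebra R L)
    (hR' : R' = (integralClosure (Algebra.adjoin R {v'}) L).restrictScalars R)
    (w : R') (hw : (w : L) = v')
    (cl : Ideal R' → Ideal R')
    (hext : ∀ J : Ideal R', J ≤ cl J)
    (horder : ∀ J J' : Ideal R', J ≤ J' → cl J ≤ cl J')
    (hBS : ∀ h' : ℕ, 1 ≤ h' → ∀ J : Ideal R',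
      (∃ t : Finset R', t.card ≤ h' ∧ Ideal.span (t : Set R') = J) →
      ∀ k : ℕ, (J ^ (h' + k)).integralClosureSet ⊆ (cl (J ^ (k + 1)) : Set R')) :
    ∀ p, p ∈ associatedPrimes R (R ⧸ I) → ∃ c : R, c ∉ p ∧
      ∀ i : Fin n, algebraMap R R' c * w ^ (s i + h) ∈
        cl (Ideal.map (algebraMap R R') (I ^ (s i + 1))) := by
  classical
  intro p hp
  haveI hpprime : p.IsPrime := hp.isPrime
  -- Edge case `I = ⊥`.
  by_cases hIbot : I = ⊥
  · subst hIbot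
    have hu0 : u = 0 := by
      have hWle : assPrimesCompl (⊥ : Ideal R) ≤ nonZeroDivisors R := by
        intro x hx
        refine mem_nonZeroDivisors_of_ne_zero fun h0 => ?_
        exact hx p hp (h0 ▸ p.zero_mem)
      have hbotpow : (⊥ : Ideal R) ^ M = ⊥ := by
        rw [← Ideal.zero_eq_bot, zero_pow (by omega : M ≠ 0)]
      have h0 : algebraMap R (Localization (assPrimesCompl (⊥ : Ideal R))) u = 0 := by
        have hm := hu
        rw [symbolicPower, Ideal.mem_comap, hbotpow, Ideal.map_bot] at hm
        simpa using hm
      have hinj := IsLocalization.injective (Localization (assPrimesCompl (⊥ : Ideal R))) hWle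
      apply hinj
      simpa using h0
    have hv0 : v = 0 := by
      have : v ^ M = 0 := by rw [hv, hu0, map_zero]
      exact pow_eq_zero_iff (by omega : M ≠ 0) |>.mp this
    have hw0 : w = 0 := by
      apply Subtype.coe_injective
      apply Subtype.coe_injective (a₁ := (w : L)) (a₂ := ((0 : R') : L))
      show ((w : L) : AlgebraicClosure (FractionRing R)) = _
      rw [hw, hv', hv0]
      simp
    refine ⟨1, fun h1 => hpprime.ne_top ((Ideal.eq_top_iff_one p).mpr h1), fun i => ?_⟩
    rw [hw0, zero_pow (by omega : s i + h ≠ 0), mul_zero]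
    exact Submodule.zero_mem _
  -- Main case.
  obtain ⟨x0, hx0I, hx0ne⟩ := Submodule.exists_mem_ne_zero_of_ne_bot hIbot
  -- Unpack the symbolic power hypothesis.
  obtain ⟨c1, hc1W, hc1u⟩ : ∃ c1, c1 ∈ assPrimesCompl I ∧ c1 * u ∈ I ^ M := by
    have hm := hu
    rw [symbolicPower, Ideal.mem_comap,
      IsLocalization.mem_map_algebraMap_iff (assPrimesCompl I)] at hm
    obtain ⟨⟨a, t⟩, hat⟩ := hm
    rw [← _root_.map_mul] at hat
    obtain ⟨cc, hcc⟩ := (IsLocalization.eq_iff_exists (assPrimesCompl I) _).mp hat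
    refine ⟨(cc : R) * (t : R), mul_mem cc.2 t.2, ?_⟩
    have heq : ((cc : R) * (t : R)) * u = (cc : R) * (a : R) := by rw [← hcc]; ring
    rw [heq]
    exact (I ^ M).mul_mem_left _ a.2
  have hc1p : c1 ∉ p := hc1W p hp
  -- Unpack the reduction hypothesis.
  obtain ⟨J, hJI, ⟨t, htcard, htspan⟩, hredu⟩ := hred p hp
  obtain ⟨-, m, hredm⟩ := hredu
  have hmapeq : (I ^ (m + 1)).map (algebraMap R (Localization.AtPrime p))
      ≤ (J * I ^ m).map (algebraMap R (Localization.AtPrime p)) := by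
    rw [Ideal.map_mul, Ideal.map_pow, Ideal.map_pow, hredm]
  obtain ⟨c2, hc2P, hc2⟩ := stmt9_denom p.primeCompl (I ^ (m + 1)) (J * I ^ m)
    (IsNoetherian.noetherian _) hmapeq
  have hc2p : c2 ∉ p := hc2P
  -- Injectivity of the algebra map into `R'`.
  have hφinj : Function.Injective (algebraMap R R') := by
    have hL : Function.Injective (algebraMap R L) := by
      rw [IsScalarTower.algebraMap_eq R (FractionRing R) L]
      exact (algebraMap (FractionRing R) L).injective.comp (IsFractionRing.injective R _)
    intro a b hab
    apply hL
    show ((algebraMap R R' a : R') : L) = ((algebraMap R R' b : R') : L)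
    rw [hab]
  have hwM : w ^ M = algebraMap R R' u := by
    apply Subtype.coe_injective
    show ((w ^ M : R') : L) = ((algebraMap R R' u : R') : L)
    have hRL : ((algebraMap R R' u : R') : L) = algebraMap R L u := rfl
    rw [hRL]
    apply Subtype.coe_injective
    show (((w ^ M : R') : L) : AlgebraicClosure (FractionRing R)) = _
    push_cast
    rw [hw, hv', hv]
    rw [IsScalarTower.algebraMap_apply R (FractionRing R) L,
      IsScalarTower.algebraMap_apply R (FractionRing R) (AlgebraicClosure (FractionRing R))]
    exact (IsScalarTower.algebraMap_apply (FractionRing R) L _ _).symm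
  -- Constants.
  set S : ℕ := h + Finset.univ.sup s with hSdef
  have hsS : ∀ i : Fin n, s i + h ≤ S := by
    intro i
    have := Finset.le_sup (f := s) (Finset.mem_univ i)
    omega
  refine ⟨c1 ^ (S + 1) * c2 ^ S, ?_, ?_⟩
  · intro hc
    rcases hpprime.mem_or_mem hc with h' | h'
    · exact hc1p (hpprime.mem_of_pow_mem _ h')
    · exact hc2p (hpprime.mem_of_pow_mem _ h')
  intro i
  have hsih : s i + h ≤ S := hsS i
  have hyint := stmt9_core (algebraMap R R') hφinj I J x0 hx0I hx0ne M hM m u c1 c2 hc1u hc2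
    w hwM (s i + h) (by omega) (S + 1) S (by omega) hsih
  have hBSA : ((J.map (algebraMap R R')) ^ (h + s i)).integralClosureSet
      ⊆ (cl ((J.map (algebraMap R R')) ^ (s i + 1)) : Set R') := by
    refine hBS h hh _ ⟨t.image (algebraMap R R'), le_trans Finset.card_image_le htcard, ?_⟩ (s i)
    rw [Finset.coe_image, ← Ideal.map_span, htspan]
  have hmem5 : algebraMap R R' (c1 ^ (S + 1) * c2 ^ S) * w ^ (s i + h)
      ∈ cl ((J.map (algebraMap R R')) ^ (s i + 1)) := by
    apply hBSA
    rwa [show h + s i = s i + h by omega]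
  have hfinal : cl ((J.map (algebraMap R R')) ^ (s i + 1))
      ≤ cl ((I ^ (s i + 1)).map (algebraMap R R')) := by
    apply horder
    rw [← Ideal.map_pow]
    exact Ideal.map_mono (Ideal.pow_right_mono hJI _)
  exact hfinal hmem5
end

section
/- Let (R, m) be a complete Noetherian local ring and let B be an R-algebra such that the structure map R → B is faithfully flat. Then R → B splits as a map of R-modules; that is, there exists an R-linear map φ : B → R with φ(1_B) = 1_R. -/
open IsLocalRing


open TensorProduct

namespace Stmt13Aux

variable {R : Type*} [CommRing R] (I : Ideal R) (M : Type*) [AddCommGroup M] [Module R M]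

/-- Multiplication map `I^n ⊗ M → M`. -/
noncomputable def mu (n : ℕ) : (↥(I ^ n) ⊗[R] M) →ₗ[R] M :=
  (TensorProduct.lid R M).toLinearMap ∘ₗ LinearMap.rTensor M (I ^ n).subtype

@[simp] lemma mu_tmul (n : ℕ) (a : ↥(I ^ n)) (b : M) : mu I M n (a ⊗ₜ b) = (a : R) • b := by
  simp [mu]

lemma mu_inj [Module.Flat R M] (n : ℕ) : Function.Injective (mu I M n) := by
  have h1 : Function.Injective (LinearMap.rTensor M (I ^ n).subtype) :=
    Module.Flat.rTensor_preserves_injective_linearMap ((I ^ n).subtype) (Submodule.injective_subtype _)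
  have h2 : Function.Injective (TensorProduct.lid R M).toLinearMap :=
    (TensorProduct.lid R M).injective
  exact h2.comp h1

lemma range_mu (n : ℕ) : LinearMap.range (mu I M n) = (I ^ n • ⊤ : Submodule R M) := by
  apply le_antisymm
  · rintro _ ⟨z, rfl⟩
    induction z using TensorProduct.induction_on with
    | zero => simp
    | tmul a b => simpa using Submodule.smul_mem_smul a.2 (Submodule.mem_top)
    | add y z hy hz => rw [map_add]; exact Submodule.add_mem _ hy hz
  · refine Submodule.smul_le.2 fun r hr b _ => ?_
    exact ⟨(⟨r, hr⟩ : ↥(I ^ n)) ⊗ₜ b, by simp⟩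

/-- Inclusion `I^(n+1) ⊗ M → I^n ⊗ M`. -/
noncomputable def incl (n : ℕ) : (↥(I ^ (n + 1)) ⊗[R] M) →ₗ[R] ↥(I ^ n) ⊗[R] M :=
  LinearMap.rTensor M (Submodule.inclusion (R := R) (Ideal.pow_le_pow_right n.le_succ))

lemma mu_incl (n : ℕ) : (mu I M n) ∘ₗ incl I M n = mu I M (n + 1) := by
  ext a b
  simp [incl, Submodule.inclusion]

end Stmt13Aux

namespace Stmt13Aux

variable {R : Type*} [CommRing R] (I : Ideal R) (M : Type*) [AddCommGroup M] [Module R M]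

/-- For `a ∈ I^n`, the map `R/I → R/I^(n+1)`, `r mod I ↦ a*r mod I^(n+1)`. -/
noncomputable def mult (n : ℕ) (a : ↥(I ^ n)) : (R ⧸ I) →ₗ[R] R ⧸ (I ^ (n + 1) : Ideal R) :=
  Submodule.liftQ I ((I ^ (n + 1) : Ideal R).mkQ ∘ₗ LinearMap.lsmul R R (a : R)) (by
    intro r hr
    simp only [LinearMap.mem_ker, LinearMap.coe_comp, Function.comp_apply, LinearMap.lsmul_apply,
      Submodule.mkQ_apply]
    rw [Submodule.Quotient.mk_eq_zero]
    exact (pow_succ I n) ▸ Ideal.mul_mem_mul a.2 hr)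

@[simp] lemma mult_mk (n : ℕ) (a : ↥(I ^ n)) (r : R) :
    mult I n a (Submodule.Quotient.mk r) = Submodule.Quotient.mk ((a : R) * r) := by
  rw [mult]
  erw [Submodule.liftQ_apply]
  simp [smul_eq_mul]

/-- `mult` as a bilinear map. -/
noncomputable def multBil (n : ℕ) : ↥(I ^ n) →ₗ[R] ((R ⧸ I) →ₗ[R] R ⧸ (I ^ (n + 1) : Ideal R)) where
  toFun := mult I n
  map_add' a a' := by
    refine LinearMap.ext fun q => ?_
    obtain ⟨r, rfl⟩ := Submodule.Quotient.mk_surjective _ q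
    simp only [mult_mk, LinearMap.add_apply, Submodule.coe_add, add_mul]
    rw [← Submodule.Quotient.mk_add]
  map_smul' s a := by
    refine LinearMap.ext fun q => ?_
    obtain ⟨r, rfl⟩ := Submodule.Quotient.mk_surjective _ q
    simp only [mult_mk, RingHom.id_apply, LinearMap.smul_apply, SetLike.val_smul, smul_eq_mul,
      mul_assoc]
    rw [← Submodule.Quotient.mk_smul]
    simp [smul_eq_mul, mul_assoc]

variable {M} in
/-- The functional `I^n ⊗ M → R/I^(n+1)` induced by a functional `d : M → R/I`. -/
noncomputable def beta (n : ℕ) (d : M →ₗ[R] R ⧸ I) : (↥(I ^ n) ⊗[R] M) →ₗ[R] R ⧸ (I ^ (n + 1) : Ideal R) :=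
  TensorProduct.lift ((LinearMap.lcomp R _ d) ∘ₗ multBil I n)

@[simp] lemma beta_tmul (n : ℕ) (d : M →ₗ[R] R ⧸ I) (a : ↥(I ^ n)) (b : M) :
    beta I n d (a ⊗ₜ b) = mult I n a (d b) := by
  simp [beta, multBil]

lemma beta_incl (n : ℕ) (d : M →ₗ[R] R ⧸ I) :
    (beta I n d) ∘ₗ incl I M n = 0 := by
  refine TensorProduct.ext' fun a b => ?_
  obtain ⟨r, hr⟩ := Submodule.Quotient.mk_surjective _ (d b)
  simp only [LinearMap.coe_comp, Function.comp_apply, incl, LinearMap.rTensor_tmul,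
    beta_tmul, LinearMap.zero_apply, ← hr, mult_mk]
  rw [Submodule.Quotient.mk_eq_zero]
  exact Ideal.mul_mem_right r _ (Submodule.coe_mem a)

end Stmt13Aux

namespace Stmt13Aux

variable {R : Type*} [CommRing R] (I : Ideal R) {M : Type*} [AddCommGroup M] [Module R M]

lemma indep [Module.Flat R M] {ι : Type*} (x : ι → M)
    (d : ι → (M →ₗ[R] R ⧸ I)) (hd1 : ∀ i, d i (x i) = 1) (hd2 : ∀ i j, j ≠ i → d i (x j) = 0)
    (n : ℕ) (c : ι →₀ R) (h : (c.sum fun i r => r • x i) ∈ (I ^ n • ⊤ : Submodule R M)) :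
    ∀ i, c i ∈ I ^ n := by
  induction n with
  | zero => intro i; simp [pow_zero, Ideal.one_eq_top]
  | succ n ih =>
    have hc : ∀ i, c i ∈ I ^ n := by
      refine ih (Submodule.smul_mono_left (Ideal.pow_le_pow_right n.le_succ) h)
    -- build the tensor z
    set z : ↥(I ^ n) ⊗[R] M := ∑ i ∈ c.support, (⟨c i, hc i⟩ : ↥(I ^ n)) ⊗ₜ[R] x i with hz_def
    have hz : mu I M n z = c.sum fun i r => r • x i := by
      rw [hz_def, map_sum]
      simp [Finsupp.sum]
    have hmem : mu I M n z ∈ LinearMap.range (mu I M (n + 1)) := by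
      rw [range_mu, hz]; exact h
    obtain ⟨w, hw⟩ := hmem
    have hzw : incl I M n w = z := by
      apply mu_inj I M n
      rw [← LinearMap.comp_apply, mu_incl, hw]
    intro i
    by_cases hi : i ∈ c.support
    · have h0 : beta I n (d i) z = 0 := by
        rw [← hzw, ← LinearMap.comp_apply, beta_incl, LinearMap.zero_apply]
      have h1 : beta I n (d i) z = Submodule.Quotient.mk (c i) := by
        rw [hz_def, map_sum]
        rw [Finset.sum_eq_single i]
        · simp only [beta_tmul, hd1 i]
          have h1' : (1 : R ⧸ I) = Submodule.Quotient.mk (1 : R) := rfl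
          rw [h1', mult_mk, mul_one]
        · intro j _ hj
          simp only [beta_tmul, hd2 i j hj, map_zero]
        · intro h'; exact absurd hi h'
      rw [h1] at h0
      exact (Submodule.Quotient.mk_eq_zero _).1 h0
    · rw [Finsupp.notMem_support_iff.1 hi]; exact Submodule.zero_mem _

end Stmt13Aux

namespace Stmt13Aux

variable {R : Type*} [CommRing R] (I : Ideal R) {M : Type*} [AddCommGroup M] [Module R M]

lemma smul_helper (n : ℕ) {r : R} {y : M} (hr : r ∈ I ^ n) (hy : y ∈ (I • ⊤ : Submodule R M)) :
    r • y ∈ (I ^ (n + 1) • ⊤ : Submodule R M) := by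
  refine Submodule.smul_induction_on hy (fun s hs b _ => ?_) (fun y1 y2 h1 h2 => ?_)
  · rw [smul_smul]
    exact Submodule.smul_mem_smul ((pow_succ I n) ▸ Ideal.mul_mem_mul hr hs) trivial
  · rw [smul_add]; exact Submodule.add_mem _ h1 h2

lemma sum_smul_eq {ι : Type*} (x : ι → M) (r : R) (c : ι →₀ R) :
    ((r • c).sum fun i a => a • x i) = r • (c.sum fun i a => a • x i) := by
  rw [Finsupp.sum_smul_index (fun i => zero_smul R (x i)), Finsupp.smul_sum]
  simp [mul_smul]

lemma span_aux {ι : Type*} (x : ι → M)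
    (hx : ∀ b : M, ∃ c : ι →₀ R, b - (c.sum fun i r => r • x i) ∈ (I • ⊤ : Submodule R M))
    (n : ℕ) (b : M) :
    ∃ c : ι →₀ R, b - (c.sum fun i r => r • x i) ∈ (I ^ n • ⊤ : Submodule R M) := by
  induction n generalizing b with
  | zero =>
    exact ⟨0, by simp [pow_zero, Ideal.one_eq_top]⟩
  | succ n ih =>
    obtain ⟨c, hcb⟩ := ih b
    have key : ∀ y ∈ (I ^ n • ⊤ : Submodule R M),
        ∃ c' : ι →₀ R, y - (c'.sum fun i r => r • x i) ∈ (I ^ (n + 1) • ⊤ : Submodule R M) := by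
      intro y hy
      refine Submodule.smul_induction_on hy (fun s hs b0 _ => ?_) (fun y1 y2 h1 h2 => ?_)
      · obtain ⟨e, he⟩ := hx b0
        refine ⟨s • e, ?_⟩
        rw [sum_smul_eq, ← smul_sub]
        exact smul_helper I n hs he
      · obtain ⟨c1, hc1⟩ := h1
        obtain ⟨c2, hc2⟩ := h2
        refine ⟨c1 + c2, ?_⟩
        rw [Finsupp.sum_add_index' (fun i => zero_smul R (x i)) (fun i a a' => add_smul a a' (x i))]
        have : y1 + y2 - ((c1.sum fun i r => r • x i) + c2.sum fun i r => r • x i)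
            = (y1 - c1.sum fun i r => r • x i) + (y2 - c2.sum fun i r => r • x i) := by abel
        rw [this]
        exact Submodule.add_mem _ hc1 hc2
    obtain ⟨c', hc'⟩ := key _ hcb
    refine ⟨c + c', ?_⟩
    rw [Finsupp.sum_add_index' (fun i => zero_smul R (x i)) (fun i a a' => add_smul a a' (x i))]
    have : b - ((c.sum fun i r => r • x i) + c'.sum fun i r => r • x i)
        = (b - c.sum fun i r => r • x i) - c'.sum fun i r => r • x i := by abel
    rw [this]
    exact hc'

end Stmt13Aux

/-- If `(R, m)` is a complete Noetherian local ring and `B` is a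
faithfully flat `R`-algebra, then `R → B` splits as a map of `R`-modules. -/
theorem stmt13 {R : Type*} [CommRing R] [IsNoetherianRing R] [IsLocalRing R]
    [IsAdicComplete (maximalIdeal R) R]
    (B : Type*) [CommRing B] [Algebra R B] [Module.FaithfullyFlat R B] :
    ∃ φ : B →ₗ[R] R, φ 1 = 1 := by
  classical
  set m : Ideal R := maximalIdeal R with hm
  letI : Field (R ⧸ m) := Ideal.Quotient.field m
  set W := B ⧸ (m • ⊤ : Submodule R B) with hWdef
  haveI : IsScalarTower R (R ⧸ m) W := Module.IsTorsionBySet.isScalarTower _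
  set bW := Module.Basis.ofVectorSpace (R ⧸ m) W with hbW
  choose x hx using fun i : Module.Basis.ofVectorSpaceIndex (R ⧸ m) W =>
    Submodule.Quotient.mk_surjective (m • ⊤ : Submodule R B) (bW i)
  set d : Module.Basis.ofVectorSpaceIndex (R ⧸ m) W → (B →ₗ[R] R ⧸ m) := fun i =>
    ((bW.coord i).restrictScalars R) ∘ₗ (m • ⊤ : Submodule R B).mkQ with hddef
  have hd : ∀ i j, d i (x j) = if j = i then 1 else 0 := by
    intro i j
    show (bW.coord i) ((m • ⊤ : Submodule R B).mkQ (x j)) = _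
    rw [Submodule.mkQ_apply, hx j, Module.Basis.coord_apply, Module.Basis.repr_self, Finsupp.single_apply]
  have hd1 : ∀ i, d i (x i) = 1 := fun i => by rw [hd i i, if_pos rfl]
  have hd2 : ∀ i j, j ≠ i → d i (x j) = 0 := fun i j hj => by rw [hd i j, if_neg hj]
  -- spanning modulo m
  have hx2 : ∀ b : B, ∃ c : Module.Basis.ofVectorSpaceIndex (R ⧸ m) W →₀ R,
      b - (c.sum fun i r => r • x i) ∈ (m • ⊤ : Submodule R B) := by
    intro b
    obtain ⟨c, hc⟩ := Finsupp.mapRange_surjective (Ideal.Quotient.mk m) (map_zero _)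
      Ideal.Quotient.mk_surjective (bW.repr (Submodule.Quotient.mk b))
    refine ⟨c, ?_⟩
    rw [← Submodule.Quotient.mk_eq_zero, Submodule.Quotient.mk_sub]
    have h2 : (Submodule.Quotient.mk (c.sum fun i r => r • x i) : W)
        = c.sum fun i r => r • (Submodule.Quotient.mk (x i) : W) := by
      rw [← Submodule.mkQ_apply, map_finsuppSum]
      simp [Submodule.mkQ_apply]
    rw [h2]
    have h3 : (c.sum fun i r => r • (Submodule.Quotient.mk (x i) : W))
        = c.sum fun i r => (Ideal.Quotient.mk m r) • bW i := by
      refine Finsupp.sum_congr fun i _ => ?_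
      rw [hx i, ← Ideal.Quotient.algebraMap_eq, algebraMap_smul]
    rw [h3]
    have h4 : (c.sum fun i r => (Ideal.Quotient.mk m r) • bW i)
        = (Finsupp.mapRange (Ideal.Quotient.mk m) (map_zero _) c).sum fun i t => t • bW i :=
      (Finsupp.sum_mapRange_index (f := ⇑(Ideal.Quotient.mk m)) (hf := map_zero _) (g := c)
        (h := fun i t => t • bW i) (fun i => zero_smul (R ⧸ m) (bW i))).symm
    rw [h4, hc]
    have h5 := bW.linearCombination_repr (Submodule.Quotient.mk b : W)
    rw [Finsupp.linearCombination_apply] at h5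
    rw [h5, sub_self]
  -- coordinates at every level
  choose cc hcc using fun n (b : B) => Stmt13Aux.span_aux m x hx2 n b
  -- uniqueness of coordinates mod m^n
  have huniq : ∀ n (b : B) (c' : Module.Basis.ofVectorSpaceIndex (R ⧸ m) W →₀ R),
      (b - (c'.sum fun i r => r • x i) ∈ (m ^ n • ⊤ : Submodule R B)) →
      ∀ i, cc n b i - c' i ∈ m ^ n := by
    intro n b c' h' i
    have hmem : ((cc n b - c').sum fun i r => r • x i) ∈ (m ^ n • ⊤ : Submodule R B) := by
      rw [Finsupp.sum_sub_index (fun i a a' => sub_smul a a' (x i))]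
      have heq : ((cc n b).sum fun i r => r • x i) - c'.sum (fun i r => r • x i)
           = (b - c'.sum fun i r => r • x i) - (b - (cc n b).sum fun i r => r • x i) := by abel
      rw [heq]
      exact Submodule.sub_mem _ h' (hcc n b)
    simpa using Stmt13Aux.indep m x d hd1 hd2 n _ hmem i
  -- a coordinate of 1 which is a unit
  have h1B : ∃ i0, cc 1 1 i0 ∉ m := by
    by_contra hno
    push_neg at hno
    have hsum : ((cc 1 1).sum fun i r => r • x i) ∈ (m • ⊤ : Submodule R B) :=
      Submodule.sum_mem _ fun i _ => Submodule.smul_mem_smul (hno i) trivial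
    have hc1 := hcc 1 1
    rw [pow_one] at hc1
    have h1m : (1 : B) ∈ (m • ⊤ : Submodule R B) := by
      have heq : (1:B) = (1 - (cc 1 1).sum fun i r => r • x i)
          + ((cc 1 1).sum fun i r => r • x i) := by abel
      rw [heq]
      exact Submodule.add_mem _ hc1 hsum
    rw [Ideal.smul_top_eq_map] at h1m
    have htop : Ideal.map (algebraMap R B) m = ⊤ := (Ideal.eq_top_iff_one _).2 h1m
    have hne := Module.FaithfullyFlat.submodule_ne_top (M := B) (maximalIdeal.isMaximal R)
    apply hne
    rw [Ideal.smul_top_eq_map]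
    show Submodule.restrictScalars R (Ideal.map (algebraMap R B) (maximalIdeal R)) = ⊤
    rw [← hm, htop]
    exact Submodule.restrictScalars_top R B B
  obtain ⟨i0, hi0⟩ := h1B
  -- the limits
  have hsm : ∀ n : ℕ, ((m ^ n : Ideal R) • ⊤ : Submodule R R) = (m ^ n : Ideal R) := fun n => by
    rw [Ideal.smul_eq_mul, Ideal.mul_top]
  have hcauchy : ∀ b : B, ∃ L : R, ∀ n, cc n b i0 - L ∈ (m ^ n : Ideal R) := by
    intro b
    obtain ⟨L, hL⟩ := IsPrecomplete.prec (IsAdicComplete.toIsPrecomplete (I := m) (M := R))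
      (f := fun n => cc n b i0) (by
        intro n n' hn
        rw [SModEq.sub_mem, hsm n]
        exact huniq n b (cc n' b)
          (Submodule.smul_mono_left (Ideal.pow_le_pow_right hn) (hcc n' b)) i0)
    refine ⟨L, fun n => ?_⟩
    have := hL n
    rw [SModEq.sub_mem, hsm n] at this
    exact this
  choose φ0 hφ0 using hcauchy
  have hzero : ∀ r : R, (∀ n : ℕ, r ∈ (m ^ n : Ideal R)) → r = 0 := by
    intro r hr
    refine (IsAdicComplete.toIsHausdorff (I := m) (M := R)).haus r fun n => ?_
    rw [SModEq.zero, hsm n]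
    exact hr n
  have hadd : ∀ b b' : B, φ0 (b + b') = φ0 b + φ0 b' := by
    intro b b'
    have key : ∀ n : ℕ, φ0 (b + b') - (φ0 b + φ0 b') ∈ (m ^ n : Ideal R) := by
      intro n
      have h4 : ∀ i, cc n (b + b') i - (cc n b + cc n b') i ∈ m ^ n := by
        refine huniq n (b + b') _ ?_
        rw [Finsupp.sum_add_index' (fun i => zero_smul R (x i)) (fun i a a' => add_smul a a' (x i))]
        have heq : b + b' - (((cc n b).sum fun i r => r • x i) + (cc n b').sum fun i r => r • x i)
            = (b - (cc n b).sum fun i r => r • x i) + (b' - (cc n b').sum fun i r => r • x i) := by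
          abel
        rw [heq]
        exact Submodule.add_mem _ (hcc n b) (hcc n b')
      have h5 := h4 i0
      rw [Finsupp.add_apply] at h5
      have heq : φ0 (b + b') - (φ0 b + φ0 b')
        = -(cc n (b + b') i0 - φ0 (b + b')) + (cc n (b + b') i0 - (cc n b i0 + cc n b' i0))
          + (cc n b i0 - φ0 b) + (cc n b' i0 - φ0 b') := by ring
      rw [heq]
      exact add_mem (add_mem (add_mem (neg_mem (hφ0 (b + b') n)) h5) (hφ0 b n)) (hφ0 b' n)
    have h6 : φ0 (b + b') - (φ0 b + φ0 b') = 0 := hzero _ key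
    exact sub_eq_zero.mp h6
  have hsmul : ∀ (r : R) (b : B), φ0 (r • b) = r * φ0 b := by
    intro r b
    have key : ∀ n : ℕ, φ0 (r • b) - r * φ0 b ∈ (m ^ n : Ideal R) := by
      intro n
      have h4 : ∀ i, cc n (r • b) i - (r • cc n b) i ∈ m ^ n := by
        refine huniq n (r • b) _ ?_
        rw [Stmt13Aux.sum_smul_eq, ← smul_sub]
        exact Submodule.smul_mem _ r (hcc n b)
      have h5 := h4 i0
      rw [Finsupp.smul_apply, smul_eq_mul] at h5
      have heq : φ0 (r • b) - r * φ0 b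
        = -(cc n (r • b) i0 - φ0 (r • b)) + (cc n (r • b) i0 - r * cc n b i0)
          + r * (cc n b i0 - φ0 b) := by ring
      rw [heq]
      exact add_mem (add_mem (neg_mem (hφ0 (r • b) n)) h5) (Ideal.mul_mem_left _ r (hφ0 b n))
    have h6 : φ0 (r • b) - r * φ0 b = 0 := hzero _ key
    exact sub_eq_zero.mp h6
  have hu : IsUnit (φ0 1) := by
    rw [← IsLocalRing.notMem_maximalIdeal]
    intro hmem
    apply hi0
    have h1 := hφ0 1 1
    rw [pow_one] at h1
    have heq : cc 1 1 i0 = (cc 1 1 i0 - φ0 1) + φ0 1 := by ring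
    rw [heq]
    exact Submodule.add_mem _ h1 hmem
  let ψ : B →ₗ[R] R :=
    { toFun := φ0, map_add' := hadd, map_smul' := hsmul }
  refine ⟨((hu.unit⁻¹ : Rˣ) : R) • ψ, ?_⟩
  have : (((hu.unit⁻¹ : Rˣ) : R) • ψ) 1 = ((hu.unit⁻¹ : Rˣ) : R) • (ψ 1) := rfl
  rw [this]
  show ((hu.unit⁻¹ : Rˣ) : R) • φ0 1 = 1
  rw [smul_eq_mul, IsUnit.val_inv_mul]
end
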